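/- arXiv:1804.06245 — 6 statements merged into one kernel-verified Lean document; each statement's English description precedes it below -/
import Mathlib

section
/- Let S be a finite nonempty subset of ℤ³ satisfying hypothesis (H). Then the function F : ℝ³ → ℝ defined by F(u) = Σ_{s∈S} exp⟨u,s⟩ is strictly convex on ℝ³. -/
/-- Euclidean inner product between a real vector `u ∈ ℝ³` and an integer step `s ∈ ℤ³`. -/
noncomputable def dot3 (u : ℝ × ℝ × ℝ) (s : ℤ × ℤ × ℤ) : ℝ :=
  u.1 * (s.1 : ℝ) + u.2.1 * (s.2.1 : ℝ) + u.2.2 * (s.2.2 : ℝ)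

/-- Hypothesis (H): the step set `S` is not contained in any half-space
`{y : ⟨x,y⟩ ≥ 0}` with `x ≠ 0`. -/
def HypH (S : Finset (ℤ × ℤ × ℤ)) : Prop :=
  ¬ ∃ x : ℝ × ℝ × ℝ, x ≠ 0 ∧ ∀ s ∈ S, 0 ≤ dot3 x s

lemma dot3_smul_add (a b : ℝ) (x y : ℝ × ℝ × ℝ) (s : ℤ × ℤ × ℤ) :
    dot3 (a • x + b • y) s = a * dot3 x s + b * dot3 y s := by
  simp only [dot3, Prod.fst_add, Prod.snd_add, Prod.smul_fst, Prod.smul_snd, smul_eq_mul]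
  ring

/-- under (H), the exponential inventory `F(u) = Σ_{s∈S} exp⟨u,s⟩`
is strictly convex on `ℝ³`. -/
theorem strictConvexOn_exp_inventory (S : Finset (ℤ × ℤ × ℤ)) (hS : S.Nonempty)
    (hH : HypH S) :
    StrictConvexOn ℝ Set.univ (fun u : ℝ × ℝ × ℝ => ∑ s ∈ S, Real.exp (dot3 u s)) := by
  refine ⟨convex_univ, ?_⟩
  intro x _ y _ hxy a b ha hb hab
  have key : ∃ s ∈ S, dot3 x s ≠ dot3 y s := by
    by_contra h
    push_neg at h
    apply hH
    refine ⟨x - y, sub_ne_zero.mpr hxy, ?_⟩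
    intro s hs
    have hd : dot3 (x - y) s = dot3 x s - dot3 y s := by
      simp only [dot3, Prod.fst_sub, Prod.snd_sub]; ring
    rw [hd, h s hs]
    simp
  obtain ⟨s0, hs0, hne⟩ := key
  have hle : ∀ s ∈ S, Real.exp (dot3 (a • x + b • y) s) ≤
      a * Real.exp (dot3 x s) + b * Real.exp (dot3 y s) := by
    intro s _
    rw [dot3_smul_add]
    exact convexOn_exp.2 (Set.mem_univ _) (Set.mem_univ _) ha.le hb.le hab
  have hlt : Real.exp (dot3 (a • x + b • y) s0) <
      a * Real.exp (dot3 x s0) + b * Real.exp (dot3 y s0) := by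
    rw [dot3_smul_add]
    exact strictConvexOn_exp.2 (Set.mem_univ _) (Set.mem_univ _) hne ha hb hab
  calc ∑ s ∈ S, Real.exp (dot3 (a • x + b • y) s)
      < ∑ s ∈ S, (a * Real.exp (dot3 x s) + b * Real.exp (dot3 y s)) :=
        Finset.sum_lt_sum hle ⟨s0, hs0, hlt⟩
    _ = a • ∑ s ∈ S, Real.exp (dot3 x s) + b • ∑ s ∈ S, Real.exp (dot3 y s) := by
        rw [Finset.sum_add_distrib, ← Finset.mul_sum, ← Finset.mul_sum]
        simp [smul_eq_mul]
end

section
/- Let S be a finite nonempty subset of ℤ³ satisfying hypothesis (H). Then the function F(u) = Σ_{s∈S} exp⟨u,s⟩ is coercive: there exists δ > 0 such that F(u) ≥ exp(δ‖u‖) for all u ∈ ℝ³; in particular F(u) → ∞ as ‖u‖ → ∞. -/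
lemma dot3_neg (x : ℝ × ℝ × ℝ) (s : ℤ × ℤ × ℤ) : dot3 (-x) s = -dot3 x s := by
  simp [dot3]; ring

lemma dot3_smul (c : ℝ) (x : ℝ × ℝ × ℝ) (s : ℤ × ℤ × ℤ) :
    dot3 (c • x) s = c * dot3 x s := by
  simp [dot3, Prod.smul_fst, Prod.smul_snd, smul_eq_mul]; ring

lemma continuous_dot3 (s : ℤ × ℤ × ℤ) : Continuous fun u : ℝ × ℝ × ℝ => dot3 u s := by
  unfold dot3; fun_prop

/-- under (H), the exponential inventory `F(u) = Σ_{s∈S} exp⟨u,s⟩` is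
coercive: there is `δ > 0` with `F(u) ≥ exp (δ‖u‖)` for all `u`; in particular
`F(u) → ∞` as `‖u‖ → ∞`. -/
theorem exp_inventory_coercive (S : Finset (ℤ × ℤ × ℤ)) (hS : S.Nonempty)
    (hH : HypH S) :
    (∃ δ > (0 : ℝ), ∀ u : ℝ × ℝ × ℝ,
        Real.exp (δ * ‖u‖) ≤ ∑ s ∈ S, Real.exp (dot3 u s)) ∧
    Filter.Tendsto (fun u : ℝ × ℝ × ℝ => ∑ s ∈ S, Real.exp (dot3 u s))
      (Filter.cocompact (ℝ × ℝ × ℝ)) Filter.atTop := by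
  -- For every x ≠ 0, some s ∈ S has dot3 x s > 0 (apply H to -x).
  unfold HypH at hH
  push_neg at hH
  have key : ∀ x : ℝ × ℝ × ℝ, x ≠ 0 → ∃ s ∈ S, 0 < dot3 x s := by
    intro x hx
    obtain ⟨s, hsS, hs⟩ := hH (-x) (neg_ne_zero.mpr hx)
    exact ⟨s, hsS, by rw [dot3_neg] at hs; linarith⟩
  -- the sup of dot3 over S, as a function of x
  set g : (ℝ × ℝ × ℝ) → ℝ := fun x => S.sup' hS (fun s => dot3 x s) with hg
  have gcont : Continuous g :=
    Continuous.finset_sup'_apply hS fun s _ => continuous_dot3 s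
  have gpos : ∀ x ∈ Metric.sphere (0 : ℝ × ℝ × ℝ) 1, 0 < g x := by
    intro x hx
    have hx0 : x ≠ 0 := by
      intro h; simp [h] at hx
    obtain ⟨s, hsS, hs⟩ := key x hx0
    exact lt_of_lt_of_le hs (Finset.le_sup' _ hsS)
  -- min of g on the compact unit sphere
  have hsc : IsCompact (Metric.sphere (0 : ℝ × ℝ × ℝ) 1) := isCompact_sphere 0 1
  have hne : (Metric.sphere (0 : ℝ × ℝ × ℝ) 1).Nonempty := by
    refine NormedSpace.sphere_nonempty.mpr ?_
    norm_num
  obtain ⟨x₀, hx₀, hmin⟩ := hsc.exists_isMinOn hne gcont.continuousOn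
  set δ := g x₀ with hδ
  have hδpos : 0 < δ := gpos x₀ hx₀
  have main : ∀ u : ℝ × ℝ × ℝ, Real.exp (δ * ‖u‖) ≤ ∑ s ∈ S, Real.exp (dot3 u s) := by
    intro u
    rcases eq_or_ne u 0 with rfl | hu
    · simp only [norm_zero, mul_zero, Real.exp_zero]
      calc (1 : ℝ) ≤ S.card := by exact_mod_cast Finset.card_pos.mpr hS
        _ = ∑ s ∈ S, Real.exp (dot3 0 s) := by
            simp [dot3]
    · have hnu : (0 : ℝ) < ‖u‖ := norm_pos_iff.mpr hu
      set x := ‖u‖⁻¹ • u with hx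
      have hxs : x ∈ Metric.sphere (0 : ℝ × ℝ × ℝ) 1 := by
        simp [hx, norm_smul, abs_of_pos (inv_pos.mpr hnu), inv_mul_cancel₀ hnu.ne']
      have : δ ≤ g x := hmin hxs
      obtain ⟨s, hsS, hs⟩ := Finset.le_sup'_iff hS |>.mp this
      have hux : u = ‖u‖ • x := by
        rw [hx, smul_smul, mul_inv_cancel₀ hnu.ne', one_smul]
      have hdeq : dot3 u s = ‖u‖ * dot3 x s := by
        conv_lhs => rw [hux, dot3_smul]
      have hds : δ * ‖u‖ ≤ dot3 u s := by
        rw [hdeq, mul_comm]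
        exact mul_le_mul_of_nonneg_left hs hnu.le
      calc Real.exp (δ * ‖u‖) ≤ Real.exp (dot3 u s) := Real.exp_le_exp.mpr hds
        _ ≤ ∑ s ∈ S, Real.exp (dot3 u s) :=
            Finset.single_le_sum (fun t _ => (Real.exp_pos _).le) hsS
  refine ⟨⟨δ, hδpos, main⟩, ?_⟩
  have h1 : Filter.Tendsto (fun u : ℝ × ℝ × ℝ => Real.exp (δ * ‖u‖))
      (Filter.cocompact (ℝ × ℝ × ℝ)) Filter.atTop := by
    refine Real.tendsto_exp_atTop.comp ?_
    exact (tendsto_norm_cocompact_atTop).const_mul_atTop hδpos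
  exact Filter.tendsto_atTop_mono main h1
end

section
/- Let S be a finite nonempty subset of ℤ³ satisfying hypothesis (H), and let χ be its inventory. Then the system of equations ∂χ/∂x = ∂χ/∂y = ∂χ/∂z = 0 admits a unique solution (x₀,y₀,z₀) in (0,∞)³, and χ attains its global minimum over (0,∞)³ exactly at the point (x₀,y₀,z₀). -/
/-- The inventory (characteristic polynomial) `χ(x,y,z) = Σ_{(i,j,k)∈S} x^i y^j z^k`
of a step set `S ⊆ ℤ³` (the exponents may be negative). -/
noncomputable def inventory (S : Finset (ℤ × ℤ × ℤ)) (x y z : ℝ) : ℝ :=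
  ∑ s ∈ S, x ^ s.1 * y ^ s.2.1 * z ^ s.2.2

namespace InvAux

open Real Finset

lemma dot3_add (u v : ℝ × ℝ × ℝ) (s : ℤ × ℤ × ℤ) :
    dot3 (u + v) s = dot3 u s + dot3 v s := by
  simp only [dot3, Prod.fst_add, Prod.snd_add]; ring

lemma dot3_sub (u v : ℝ × ℝ × ℝ) (s : ℤ × ℤ × ℤ) :
    dot3 (u - v) s = dot3 u s - dot3 v s := by
  simp only [dot3, Prod.fst_sub, Prod.snd_sub]; ring

lemma dot3_neg (u : ℝ × ℝ × ℝ) (s : ℤ × ℤ × ℤ) : dot3 (-u) s = - dot3 u s := by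
  simp only [dot3, Prod.fst_neg, Prod.snd_neg]; ring

lemma dot3_smul (c : ℝ) (u : ℝ × ℝ × ℝ) (s : ℤ × ℤ × ℤ) :
    dot3 (c • u) s = c * dot3 u s := by
  simp only [dot3, Prod.smul_fst, Prod.smul_snd, smul_eq_mul]; ring

lemma continuous_dot3 (s : ℤ × ℤ × ℤ) : Continuous fun u : ℝ × ℝ × ℝ => dot3 u s := by
  unfold dot3; fun_prop

/-- The inventory in exponential coordinates. -/
noncomputable def G (S : Finset (ℤ × ℤ × ℤ)) (u : ℝ × ℝ × ℝ) : ℝ :=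
  ∑ s ∈ S, Real.exp (dot3 u s)

lemma G_cont (S : Finset (ℤ × ℤ × ℤ)) : Continuous (G S) :=
  continuous_finset_sum _ fun s _ => Real.continuous_exp.comp (continuous_dot3 s)

lemma G_pos (S : Finset (ℤ × ℤ × ℤ)) (hS : S.Nonempty) (u : ℝ × ℝ × ℝ) : 0 < G S u :=
  Finset.sum_pos (fun s _ => Real.exp_pos _) hS

lemma exists_pos (S : Finset (ℤ × ℤ × ℤ)) (hH : HypH S) (d : ℝ × ℝ × ℝ) (hd : d ≠ 0) :
    ∃ s ∈ S, 0 < dot3 d s := by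
  by_contra h
  push_neg at h
  exact hH ⟨-d, neg_ne_zero.mpr hd, fun s hs => by
    rw [dot3_neg]; linarith [h s hs]⟩

/-- The gradient inequality, proved termwise from `m + 1 ≤ exp m`. -/
lemma grad_ineq (S : Finset (ℤ × ℤ × ℤ)) (u d : ℝ × ℝ × ℝ) :
    ∑ s ∈ S, dot3 d s * Real.exp (dot3 u s) ≤ G S (u + d) - G S u := by
  unfold G
  rw [← Finset.sum_sub_distrib]
  apply Finset.sum_le_sum
  intro s _
  rw [dot3_add, Real.exp_add]
  nlinarith [Real.add_one_le_exp (dot3 d s), Real.exp_pos (dot3 u s)]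

lemma exp_mid_le (A B : ℝ) : Real.exp ((A + B) / 2) ≤ (Real.exp A + Real.exp B) / 2 := by
  have hpq : Real.exp (A/2) * Real.exp (B/2) = Real.exp ((A + B)/2) := by
    rw [← Real.exp_add]; ring_nf
  have hp2 : Real.exp (A/2) * Real.exp (A/2) = Real.exp A := by
    rw [← Real.exp_add]; ring_nf
  have hq2 : Real.exp (B/2) * Real.exp (B/2) = Real.exp B := by
    rw [← Real.exp_add]; ring_nf
  nlinarith [sq_nonneg (Real.exp (A/2) - Real.exp (B/2))]

lemma exp_mid_lt {A B : ℝ} (h : A ≠ B) :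
    Real.exp ((A + B) / 2) < (Real.exp A + Real.exp B) / 2 := by
  have hpq : Real.exp (A/2) * Real.exp (B/2) = Real.exp ((A + B)/2) := by
    rw [← Real.exp_add]; ring_nf
  have hp2 : Real.exp (A/2) * Real.exp (A/2) = Real.exp A := by
    rw [← Real.exp_add]; ring_nf
  have hq2 : Real.exp (B/2) * Real.exp (B/2) = Real.exp B := by
    rw [← Real.exp_add]; ring_nf
  have hne : Real.exp (A/2) - Real.exp (B/2) ≠ 0 := by
    intro h'
    exact h (by have := sub_eq_zero.mp h'; have := Real.exp_eq_exp.mp this; linarith)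
  nlinarith [sq_pos_of_ne_zero hne]

/-- Existence of a strict global minimizer of `G`. -/
lemma exists_min (S : Finset (ℤ × ℤ × ℤ)) (hS : S.Nonempty) (hH : HypH S) :
    ∃ u₀ : ℝ × ℝ × ℝ, ∀ v, v ≠ u₀ → G S u₀ < G S v := by
  classical
  set N : ℝ × ℝ × ℝ → ℝ := fun u => ∑ s ∈ S, max (dot3 u s) 0 with hN
  have hNcont : Continuous N :=
    continuous_finset_sum _ fun s _ => (continuous_dot3 s).max continuous_const
  have hNpos : ∀ d : ℝ × ℝ × ℝ, d ≠ 0 → 0 < N d := by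
    intro d hd
    obtain ⟨s, hs, hspos⟩ := exists_pos S hH d hd
    exact Finset.sum_pos' (fun s _ => le_max_right _ _) ⟨s, hs, lt_max_iff.mpr (Or.inl hspos)⟩
  obtain ⟨d₀, hd₀mem, hd₀min⟩ := (isCompact_sphere (0 : ℝ × ℝ × ℝ) 1).exists_isMinOn
    (NormedSpace.sphere_nonempty.mpr zero_le_one) hNcont.continuousOn
  rw [isMinOn_iff] at hd₀min
  have hd₀ : d₀ ≠ 0 := by
    rw [mem_sphere_zero_iff_norm] at hd₀mem
    intro h; rw [h] at hd₀mem; simp at hd₀mem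
  set ε : ℝ := N d₀ with hεdef
  have hε : 0 < ε := hNpos d₀ hd₀
  have hlow : ∀ u : ℝ × ℝ × ℝ, u ≠ 0 → ε * ‖u‖ ≤ N u := by
    intro u hu
    have hnorm : (0:ℝ) < ‖u‖ := norm_pos_iff.mpr hu
    have hmem : ‖u‖⁻¹ • u ∈ Metric.sphere (0 : ℝ × ℝ × ℝ) 1 := by
      rw [mem_sphere_zero_iff_norm, norm_smul, norm_inv, norm_norm,
        inv_mul_cancel₀ hnorm.ne']
    have h1 := hd₀min _ hmem
    have h2 : N (‖u‖⁻¹ • u) = ‖u‖⁻¹ * N u := by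
      rw [hN]
      simp only
      rw [Finset.mul_sum]
      apply Finset.sum_congr rfl
      intro s _
      rw [dot3_smul, mul_max_of_nonneg _ _ (by positivity), mul_zero]
    rw [h2] at h1
    calc ε * ‖u‖ ≤ (‖u‖⁻¹ * N u) * ‖u‖ := by nlinarith
    _ = N u := by field_simp
  have hcard : (0:ℝ) < S.card := by exact_mod_cast hS.card_pos
  have hGlow : ∀ u : ℝ × ℝ × ℝ, u ≠ 0 → Real.exp (ε * ‖u‖ / S.card) ≤ G S u := by
    intro u hu
    obtain ⟨b, hb, hbmax⟩ := S.exists_max_image (fun s => max (dot3 u s) 0) hS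
    have hNu : 0 < N u := hNpos u hu
    have h1 : N u ≤ S.card * max (dot3 u b) 0 := by
      calc N u ≤ ∑ _s ∈ S, max (dot3 u b) 0 := Finset.sum_le_sum fun s hs => hbmax s hs
      _ = S.card * max (dot3 u b) 0 := by rw [Finset.sum_const, nsmul_eq_mul]
    have hmb : 0 < max (dot3 u b) 0 := by nlinarith
    have hpos : 0 < dot3 u b := by
      rcases lt_max_iff.mp hmb with h | h
      · exact h
      · exact absurd h (lt_irrefl 0)
    have h2 : ε * ‖u‖ / S.card ≤ dot3 u b := by
      rw [div_le_iff₀ hcard]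
      have := hlow u hu
      rw [max_eq_left hpos.le] at h1
      nlinarith
    calc Real.exp (ε * ‖u‖ / S.card) ≤ Real.exp (dot3 u b) := Real.exp_le_exp.mpr h2
    _ ≤ G S u := Finset.single_le_sum (fun s _ => (Real.exp_pos _).le) hb
  -- sublevel set
  set K : Set (ℝ × ℝ × ℝ) := {u | G S u ≤ G S 0} with hK
  have h0K : (0 : ℝ × ℝ × ℝ) ∈ K := by simp only [hK, Set.mem_setOf_eq]; exact le_refl _
  have hG0 : 0 < G S 0 := G_pos S hS 0
  have hKb : Bornology.IsBounded K := by
    apply (Metric.isBounded_closedBall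
      (x := (0 : ℝ × ℝ × ℝ)) (r := max 0 (S.card * Real.log (G S 0) / ε))).subset
    intro u hu
    rw [Metric.mem_closedBall, dist_zero_right]
    by_cases h0 : u = 0
    · rw [h0]; simp
    · have h1 := (hGlow u h0).trans hu
      have h2 : ε * ‖u‖ / S.card ≤ Real.log (G S 0) :=
        (Real.le_log_iff_exp_le hG0).mpr h1
      have : ‖u‖ ≤ S.card * Real.log (G S 0) / ε := by
        rw [div_le_iff₀ hcard] at h2
        rw [le_div_iff₀ hε]
        nlinarith
      exact this.trans (le_max_right _ _)
  have hKcl : IsClosed K := isClosed_le (G_cont S) continuous_const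
  obtain ⟨u₀, hu₀K, hu₀min⟩ :=
    (Metric.isCompact_of_isClosed_isBounded hKcl hKb).exists_isMinOn ⟨0, h0K⟩
      (G_cont S).continuousOn
  rw [isMinOn_iff] at hu₀min
  have hglob : ∀ v, G S u₀ ≤ G S v := by
    intro v
    by_cases hv : v ∈ K
    · exact hu₀min v hv
    · have : G S 0 < G S v := not_le.mp hv
      exact (hu₀min 0 h0K).trans this.le
  refine ⟨u₀, fun v hv => ?_⟩
  rcases lt_or_ge (G S u₀) (G S v) with h | h
  · exact h
  -- then G S v = G S u₀; contradiction via midpoint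
  exfalso
  have heq : G S v = G S u₀ := le_antisymm h (hglob v)
  have hd : v - u₀ ≠ 0 := sub_ne_zero.mpr hv
  obtain ⟨s₀, hs₀, hs₀pos⟩ := exists_pos S hH (v - u₀) hd
  set m : ℝ × ℝ × ℝ := u₀ + (2⁻¹ : ℝ) • (v - u₀) with hm
  have hmid : G S m < (G S u₀ + G S v) / 2 := by
    unfold G
    rw [← Finset.sum_add_distrib, Finset.sum_div]
    apply Finset.sum_lt_sum
    · intro s _
      have : dot3 m s = (dot3 u₀ s + dot3 v s) / 2 := by
        rw [hm, dot3_add, dot3_smul, dot3_sub]; ring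
      rw [this]
      exact exp_mid_le _ _
    · refine ⟨s₀, hs₀, ?_⟩
      have : dot3 m s₀ = (dot3 u₀ s₀ + dot3 v s₀) / 2 := by
        rw [hm, dot3_add, dot3_smul, dot3_sub]; ring
      rw [this]
      apply exp_mid_lt
      rw [dot3_sub] at hs₀pos
      intro h'; rw [h'] at hs₀pos; linarith
  rw [heq] at hmid
  have := hglob m
  linarith

/-- Directional derivative of `G` along a line. -/
lemma hasDerivAt_line (S : Finset (ℤ × ℤ × ℤ)) (u d : ℝ × ℝ × ℝ) (t : ℝ) :
    HasDerivAt (fun t : ℝ => G S (u + t • d))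
      (∑ s ∈ S, dot3 d s * Real.exp (dot3 u s + t * dot3 d s)) t := by
  have hfun : (fun t : ℝ => G S (u + t • d))
      = fun t : ℝ => ∑ s ∈ S, Real.exp (dot3 u s + t * dot3 d s) := by
    funext t
    unfold G
    exact Finset.sum_congr rfl fun s _ => by rw [dot3_add, dot3_smul]
  rw [hfun]
  apply HasDerivAt.fun_sum
  intro s _
  have h1 : HasDerivAt (fun t : ℝ => dot3 u s + t * dot3 d s) (dot3 d s) t := by
    simpa using ((hasDerivAt_id t).mul_const (dot3 d s)).const_add (dot3 u s)
  simpa [mul_comm] using h1.exp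

lemma term_eq {x y z : ℝ} (hx : 0 < x) (hy : 0 < y) (hz : 0 < z) (s : ℤ × ℤ × ℤ) :
    x ^ s.1 * y ^ s.2.1 * z ^ s.2.2
      = Real.exp (dot3 (Real.log x, Real.log y, Real.log z) s) := by
  have key : ∀ w : ℝ, 0 < w → ∀ i : ℤ, w ^ i = Real.exp (Real.log w * i) := by
    intro w hw i
    rw [← Real.rpow_intCast w i, Real.rpow_def_of_pos hw]
  rw [key x hx, key y hy, key z hz, ← Real.exp_add, ← Real.exp_add]
  rfl

lemma inv_eq_G (S : Finset (ℤ × ℤ × ℤ)) {x y z : ℝ} (hx : 0 < x) (hy : 0 < y) (hz : 0 < z) :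
    inventory S x y z = G S (Real.log x, Real.log y, Real.log z) :=
  Finset.sum_congr rfl fun s _ => term_eq hx hy hz s

lemma deriv_inv_x (S : Finset (ℤ × ℤ × ℤ)) {x y z : ℝ} (hx : 0 < x) (hy : 0 < y) (hz : 0 < z) :
    deriv (fun x' => inventory S x' y z) x
      = (∑ s ∈ S, (s.1 : ℝ) * Real.exp (dot3 (Real.log x, Real.log y, Real.log z) s)) / x := by
  have h : HasDerivAt (fun x' => inventory S x' y z)
      (∑ s ∈ S, (s.1 : ℝ) * x ^ (s.1 - 1) * y ^ s.2.1 * z ^ s.2.2) x := by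
    unfold inventory
    apply HasDerivAt.fun_sum
    intro s _
    exact ((hasDerivAt_zpow s.1 x (Or.inl hx.ne')).mul_const (y ^ s.2.1)).mul_const (z ^ s.2.2)
  rw [h.deriv, Finset.sum_div]
  apply Finset.sum_congr rfl
  intro s _
  rw [← term_eq hx hy hz s, zpow_sub_one₀ hx.ne']
  field_simp

lemma deriv_inv_y (S : Finset (ℤ × ℤ × ℤ)) {x y z : ℝ} (hx : 0 < x) (hy : 0 < y) (hz : 0 < z) :
    deriv (fun y' => inventory S x y' z) y
      = (∑ s ∈ S, (s.2.1 : ℝ) * Real.exp (dot3 (Real.log x, Real.log y, Real.log z) s)) / y := by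
  have h : HasDerivAt (fun y' => inventory S x y' z)
      (∑ s ∈ S, x ^ s.1 * ((s.2.1 : ℝ) * y ^ (s.2.1 - 1)) * z ^ s.2.2) y := by
    unfold inventory
    apply HasDerivAt.fun_sum
    intro s _
    exact (((hasDerivAt_zpow s.2.1 y (Or.inl hy.ne')).const_mul (x ^ s.1)).mul_const
      (z ^ s.2.2))
  rw [h.deriv, Finset.sum_div]
  apply Finset.sum_congr rfl
  intro s _
  rw [← term_eq hx hy hz s, zpow_sub_one₀ hy.ne']
  field_simp

lemma deriv_inv_z (S : Finset (ℤ × ℤ × ℤ)) {x y z : ℝ} (hx : 0 < x) (hy : 0 < y) (hz : 0 < z) :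
    deriv (fun z' => inventory S x y z') z
      = (∑ s ∈ S, (s.2.2 : ℝ) * Real.exp (dot3 (Real.log x, Real.log y, Real.log z) s)) / z := by
  have h : HasDerivAt (fun z' => inventory S x y z')
      (∑ s ∈ S, x ^ s.1 * y ^ s.2.1 * ((s.2.2 : ℝ) * z ^ (s.2.2 - 1))) z := by
    unfold inventory
    apply HasDerivAt.fun_sum
    intro s _
    exact (hasDerivAt_zpow s.2.2 z (Or.inl hz.ne')).const_mul (x ^ s.1 * y ^ s.2.1)
  rw [h.deriv, Finset.sum_div]
  apply Finset.sum_congr rfl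
  intro s _
  rw [← term_eq hx hy hz s, zpow_sub_one₀ hz.ne']
  field_simp

lemma D_decomp (S : Finset (ℤ × ℤ × ℤ)) (u d : ℝ × ℝ × ℝ) :
    ∑ s ∈ S, dot3 d s * Real.exp (dot3 u s)
      = d.1 * (∑ s ∈ S, (s.1 : ℝ) * Real.exp (dot3 u s))
        + d.2.1 * (∑ s ∈ S, (s.2.1 : ℝ) * Real.exp (dot3 u s))
        + d.2.2 * (∑ s ∈ S, (s.2.2 : ℝ) * Real.exp (dot3 u s)) := by
  rw [Finset.mul_sum, Finset.mul_sum, Finset.mul_sum, ← Finset.sum_add_distrib,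
    ← Finset.sum_add_distrib]
  apply Finset.sum_congr rfl
  intro s _
  unfold dot3
  ring

end InvAux

open InvAux Real in
/-- under (H), the system `∂χ/∂x = ∂χ/∂y = ∂χ/∂z = 0` has a unique
solution `(x₀,y₀,z₀)` in `(0,∞)³`, and `χ` attains its global minimum on `(0,∞)³`
exactly at this point. -/
theorem inventory_unique_critical_point (S : Finset (ℤ × ℤ × ℤ)) (hS : S.Nonempty)
    (hH : HypH S) :
    ∃ x₀ y₀ z₀ : ℝ, 0 < x₀ ∧ 0 < y₀ ∧ 0 < z₀ ∧
      deriv (fun x => inventory S x y₀ z₀) x₀ = 0 ∧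
      deriv (fun y => inventory S x₀ y z₀) y₀ = 0 ∧
      deriv (fun z => inventory S x₀ y₀ z) z₀ = 0 ∧
      (∀ x y z : ℝ, 0 < x → 0 < y → 0 < z →
        deriv (fun x' => inventory S x' y z) x = 0 →
        deriv (fun y' => inventory S x y' z) y = 0 →
        deriv (fun z' => inventory S x y z') z = 0 →
        (x, y, z) = (x₀, y₀, z₀)) ∧
      (∀ x y z : ℝ, 0 < x → 0 < y → 0 < z → (x, y, z) ≠ (x₀, y₀, z₀) →
        inventory S x₀ y₀ z₀ < inventory S x y z) := by
  classical
  obtain ⟨u₀, hu₀⟩ := exists_min S hS hH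
  have hglob : ∀ v, G S u₀ ≤ G S v := by
    intro v
    by_cases hv : v = u₀
    · rw [hv]
    · exact (hu₀ v hv).le
  have hlog : (Real.log (Real.exp u₀.1), Real.log (Real.exp u₀.2.1),
      Real.log (Real.exp u₀.2.2)) = u₀ := by
    simp [Real.log_exp]
  -- all directional derivatives of G vanish at u₀
  have crit : ∀ d : ℝ × ℝ × ℝ, ∑ s ∈ S, dot3 d s * Real.exp (dot3 u₀ s) = 0 := by
    intro d
    have hloc : IsLocalMin (fun t : ℝ => G S (u₀ + t • d)) 0 := by
      apply Filter.Eventually.filter_mono (le_refl _)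
      apply Filter.Eventually.of_forall
      intro t
      simp only
      have h1 : G S (u₀ + (0:ℝ) • d) = G S u₀ := by simp
      rw [h1]
      exact hglob _
    have hda := hasDerivAt_line S u₀ d 0
    have h0 := hloc.deriv_eq_zero
    rw [hda.deriv] at h0
    simpa using h0
  have hP1 : ∑ s ∈ S, (s.1 : ℝ) * Real.exp (dot3 u₀ s) = 0 := by
    have := crit (1, 0, 0)
    simpa [dot3] using this
  have hP2 : ∑ s ∈ S, (s.2.1 : ℝ) * Real.exp (dot3 u₀ s) = 0 := by
    have := crit (0, 1, 0)
    simpa [dot3] using this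
  have hP3 : ∑ s ∈ S, (s.2.2 : ℝ) * Real.exp (dot3 u₀ s) = 0 := by
    have := crit (0, 0, 1)
    simpa [dot3] using this
  refine ⟨Real.exp u₀.1, Real.exp u₀.2.1, Real.exp u₀.2.2,
    Real.exp_pos _, Real.exp_pos _, Real.exp_pos _, ?_, ?_, ?_, ?_, ?_⟩
  · rw [deriv_inv_x S (Real.exp_pos _) (Real.exp_pos _) (Real.exp_pos _), hlog, hP1, zero_div]
  · rw [deriv_inv_y S (Real.exp_pos _) (Real.exp_pos _) (Real.exp_pos _), hlog, hP2, zero_div]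
  · rw [deriv_inv_z S (Real.exp_pos _) (Real.exp_pos _) (Real.exp_pos _), hlog, hP3, zero_div]
  · -- uniqueness
    intro x y z hx hy hz h1 h2 h3
    set u : ℝ × ℝ × ℝ := (Real.log x, Real.log y, Real.log z) with hudef
    rw [deriv_inv_x S hx hy hz, div_eq_zero_iff] at h1
    rw [deriv_inv_y S hx hy hz, div_eq_zero_iff] at h2
    rw [deriv_inv_z S hx hy hz, div_eq_zero_iff] at h3
    have hQ1 : ∑ s ∈ S, (s.1 : ℝ) * Real.exp (dot3 u s) = 0 :=
      h1.resolve_right hx.ne'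
    have hQ2 : ∑ s ∈ S, (s.2.1 : ℝ) * Real.exp (dot3 u s) = 0 :=
      h2.resolve_right hy.ne'
    have hQ3 : ∑ s ∈ S, (s.2.2 : ℝ) * Real.exp (dot3 u s) = 0 :=
      h3.resolve_right hz.ne'
    have hD : ∑ s ∈ S, dot3 (u₀ - u) s * Real.exp (dot3 u s) = 0 := by
      rw [D_decomp, hQ1, hQ2, hQ3]; ring
    have hgi := grad_ineq S u (u₀ - u)
    rw [hD, add_sub_cancel] at hgi
    have huu : u = u₀ := by
      by_contra hne
      have := hu₀ u hne
      linarith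
    have hxx : x = Real.exp u₀.1 := by
      rw [← huu]; exact (Real.exp_log hx).symm
    have hyy : y = Real.exp u₀.2.1 := by
      rw [← huu]; exact (Real.exp_log hy).symm
    have hzz : z = Real.exp u₀.2.2 := by
      rw [← huu]; exact (Real.exp_log hz).symm
    rw [hxx, hyy, hzz]
  · -- strict minimum
    intro x y z hx hy hz hne
    rw [inv_eq_G S hx hy hz, inv_eq_G S (Real.exp_pos _) (Real.exp_pos _) (Real.exp_pos _),
      hlog]
    apply hu₀
    intro h
    apply hne
    have hxx : x = Real.exp u₀.1 := by
      rw [← Real.exp_log hx]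
      exact congrArg Real.exp (congrArg Prod.fst h)
    have hyy : y = Real.exp u₀.2.1 := by
      rw [← Real.exp_log hy]
      exact congrArg Real.exp (congrArg (fun p : ℝ × ℝ × ℝ => p.2.1) h)
    have hzz : z = Real.exp u₀.2.2 := by
      rw [← Real.exp_log hz]
      exact congrArg Real.exp (congrArg (fun p : ℝ × ℝ × ℝ => p.2.2) h)
    rw [hxx, hyy, hzz]
end

section
/- The number arccos(-√7/3) is not a rational multiple of π; equivalently, π/arccos(-√7/3) is irrational. (Consequently the critical exponent λ = π/arccos(-√7/3) + 5/2 of the corresponding 3D walk model is irrational.) -/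
open Polynomial in
lemma two_cos_rat_mul_pi_isIntegral (q : ℚ) :
    IsIntegral ℤ (2 * Complex.cos (q * Real.pi)) := by
  set θ : ℂ := (q : ℂ) * (Real.pi : ℂ)
  set z : ℂ := Complex.exp (θ * Complex.I)
  have hz0 : z ≠ 0 := Complex.exp_ne_zero _
  have hd : (2 * q.den : ℕ) ≠ 0 := by positivity
  have hzpow : z ^ (2 * q.den) = 1 := by
    rw [← Complex.exp_nat_mul]
    have : (2 * q.den : ℕ) * (θ * Complex.I) = (q.num : ℂ) * (2 * Real.pi * Complex.I) := by
      have hq : ((q.den : ℂ)) * (q : ℂ) = (q.num : ℂ) := by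
        rw [mul_comm]
        exact_mod_cast congrArg (Rat.cast : ℚ → ℂ) (Rat.mul_den_eq_num q)
      push_cast
      ring_nf
      ring_nf at hq
      rw [← hq]; ring
    rw [this, Complex.exp_int_mul_two_pi_mul_I]
  have hzint : IsIntegral ℤ z := by
    refine ⟨X ^ (2 * q.den) - C 1, monic_X_pow_sub_C 1 hd, ?_⟩
    simp [hzpow]
  have hzinv : IsIntegral ℤ z⁻¹ := by
    have : z⁻¹ = z ^ (2 * q.den - 1) := by
      refine inv_eq_of_mul_eq_one_right ?_
      rw [← pow_succ']
      rw [show 2 * q.den - 1 + 1 = 2 * q.den from by omega, hzpow]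
    rw [this]
    exact hzint.pow _
  have hsum : z + z⁻¹ = 2 * Complex.cos θ := by
    rw [Complex.cos, ← Complex.exp_neg]
    ring_nf
    exact add_comm _ _
  rw [← hsum]
  exact hzint.add hzinv

lemma key (q : ℚ) : Real.arccos (-(Real.sqrt 7 / 3)) ≠ (q : ℝ) * Real.pi := by
  intro hq
  have h7 : Real.sqrt 7 ^ 2 = 7 := Real.sq_sqrt (by norm_num)
  have hmem : (-1 : ℝ) ≤ -(Real.sqrt 7 / 3) := by
    nlinarith [Real.sqrt_nonneg 7, Real.sq_sqrt (by norm_num : (7:ℝ) ≥ 0)]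
  have hcos : Real.cos ((q : ℝ) * Real.pi) = -(Real.sqrt 7 / 3) := by
    rw [← hq, Real.cos_arccos hmem (by nlinarith [Real.sqrt_nonneg 7])]
  have hint := two_cos_rat_mul_pi_isIntegral q
  have hint2 : IsIntegral ℤ ((2 * Complex.cos (Complex.ofReal ((q:ℝ) * Real.pi))) ^ 2) := by
    have : (q : ℂ) * (Real.pi : ℂ) = Complex.ofReal ((q:ℝ) * Real.pi) := by push_cast; ring
    rw [this] at hint
    exact hint.pow 2
  have hval : (2 * Complex.cos (Complex.ofReal ((q:ℝ) * Real.pi))) ^ 2 = ((28/9 : ℚ) : ℂ) := by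
    have hR : ((2:ℝ) * (-(Real.sqrt 7 / 3))) ^ 2 = 28/9 := by nlinarith [h7]
    rw [← Complex.ofReal_cos, hcos]
    have h2 : (2 : ℂ) * ((-(Real.sqrt 7 / 3) : ℝ) : ℂ) = (((2 * (-(Real.sqrt 7 / 3)) : ℝ)) : ℂ) := by
      push_cast; ring
    rw [h2, ← Complex.ofReal_pow, hR]
    norm_num
  rw [hval] at hint2
  have : IsIntegral ℤ ((28/9 : ℚ)) := by
    rwa [show ((28/9 : ℚ) : ℂ) = algebraMap ℚ ℂ (28/9 : ℚ) from rfl,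
      isIntegral_algebraMap_iff (algebraMap ℚ ℂ).injective] at hint2
  obtain ⟨y, hy⟩ := IsIntegrallyClosed.isIntegral_iff.mp this
  have := congrArg Rat.den hy
  simp at this
  norm_num at this

/-- `arccos(-√7/3)` is not a rational multiple of `π`; equivalently
`π / arccos(-√7/3)` is irrational, and consequently the critical exponent
`λ = π/arccos(-√7/3) + 5/2` is irrational. -/
theorem arccos_neg_sqrt7_div3_not_rat_mul_pi :
    (∀ q : ℚ, Real.arccos (-(Real.sqrt 7 / 3)) ≠ (q : ℝ) * Real.pi) ∧
    Irrational (Real.pi / Real.arccos (-(Real.sqrt 7 / 3))) ∧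
    Irrational (Real.pi / Real.arccos (-(Real.sqrt 7 / 3)) + 5 / 2) := by
  have hlt : -(Real.sqrt 7 / 3) < 1 := by
    nlinarith [Real.sqrt_nonneg 7]
  have hpos : 0 < Real.arccos (-(Real.sqrt 7 / 3)) := Real.arccos_pos.mpr hlt
  have hirr : Irrational (Real.pi / Real.arccos (-(Real.sqrt 7 / 3))) := by
    rw [Irrational]
    intro ⟨q, hq⟩
    have hq0 : (q : ℝ) ≠ 0 := by
      rw [hq]
      positivity
    have hπ : (q : ℝ) * Real.arccos (-(Real.sqrt 7 / 3)) = Real.pi := by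
      rw [hq, div_mul_cancel₀ _ (ne_of_gt hpos)]
    have : Real.arccos (-(Real.sqrt 7 / 3)) = ((q⁻¹ : ℚ) : ℝ) * Real.pi := by
      push_cast
      rw [← hπ, inv_mul_cancel_left₀ hq0]
    exact key q⁻¹ this
  refine ⟨key, hirr, ?_⟩
  have := hirr.add_ratCast (5/2)
  convert this using 2
  norm_num
end

section
/- The number arccos(-√(7/10)) is not a rational multiple of π; equivalently, π/arccos(-√(7/10)) is irrational. (Consequently the critical exponent λ = π/arccos(-√(7/10)) + 5/2 of the corresponding 3D walk model is irrational.) -/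
lemma aux_root_int {d : ℕ} (hd : d ≠ 0) {z : ℂ} (hz : z ^ d = 1) : IsIntegral ℤ z := by
  refine ⟨Polynomial.X ^ d - Polynomial.C 1, Polynomial.monic_X_pow_sub_C 1 hd, ?_⟩
  simp [Polynomial.eval₂_sub, hz]

lemma aux_integral_two_cos (q : ℚ) : IsIntegral ℤ (((2 * Real.cos ((q : ℝ) * Real.pi) : ℝ)) : ℂ) := by
  set t : ℝ := (q : ℝ) * Real.pi with ht
  have hden : ((q.den : ℂ)) * (q : ℂ) = (q.num : ℂ) := by
    have hd0 : ((q.den : ℚ)) ≠ 0 := by exact_mod_cast q.den_ne_zero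
    have h := Rat.num_div_den q
    rw [div_eq_iff hd0] at h
    rw [mul_comm]
    exact_mod_cast h.symm
  have h1 : Complex.exp (t * Complex.I) ^ (2 * q.den) = 1 := by
    rw [← Complex.exp_nat_mul]
    have : ((2 * q.den : ℕ) : ℂ) * (t * Complex.I) = (q.num : ℂ) * (2 * Real.pi * Complex.I) := by
      push_cast [ht]
      rw [← hden]; ring
    rw [this]
    exact_mod_cast Complex.exp_int_mul_two_pi_mul_I q.num
  have h2 : Complex.exp (-t * Complex.I) ^ (2 * q.den) = 1 := by
    rw [← Complex.exp_nat_mul]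
    have : ((2 * q.den : ℕ) : ℂ) * (-t * Complex.I) = ((-q.num : ℤ) : ℂ) * (2 * Real.pi * Complex.I) := by
      push_cast [ht]
      rw [← hden]; ring
    rw [this]
    exact Complex.exp_int_mul_two_pi_mul_I (-q.num)
  have hd : 2 * q.den ≠ 0 := by positivity
  have := (aux_root_int hd h1).add (aux_root_int hd h2)
  have heq : ((2 * Real.cos t : ℝ) : ℂ) = Complex.exp (t * Complex.I) + Complex.exp (-t * Complex.I) := by
    push_cast
    rw [← Complex.ofReal_cos, ← Complex.two_cos]
    push_cast; ring
  rwa [heq]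

/-- `arccos(-√(7/10))` is not a rational multiple of `π`; equivalently
`π / arccos(-√(7/10))` is irrational, and consequently the critical exponent
`λ = π/arccos(-√(7/10)) + 5/2` is irrational. -/
theorem arccos_neg_sqrt_7_div_10_not_rat_mul_pi :
    (∀ q : ℚ, Real.arccos (-Real.sqrt (7 / 10)) ≠ (q : ℝ) * Real.pi) ∧
    Irrational (Real.pi / Real.arccos (-Real.sqrt (7 / 10))) ∧
    Irrational (Real.pi / Real.arccos (-Real.sqrt (7 / 10)) + 5 / 2) := by
  have hsle : Real.sqrt (7 / 10) ≤ 1 := by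
    rw [show (1:ℝ) = Real.sqrt 1 by simp]
    exact Real.sqrt_le_sqrt (by norm_num)
  have hpos : 0 < Real.arccos (-Real.sqrt (7 / 10)) :=
    Real.arccos_pos.2
      (lt_of_le_of_lt (neg_nonpos.2 (Real.sqrt_nonneg _)) one_pos)
  have h1 : ∀ q : ℚ, Real.arccos (-Real.sqrt (7 / 10)) ≠ (q : ℝ) * Real.pi := by
    intro q hq
    have hcos : Real.cos ((q : ℝ) * Real.pi) = -Real.sqrt (7 / 10) := by
      rw [← hq]
      exact Real.cos_arccos (by linarith)
        (le_trans (neg_nonpos.2 (Real.sqrt_nonneg _)) zero_le_one)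
    have hint := aux_integral_two_cos q
    have hsq := hint.mul hint
    have hval : ((2 * Real.cos ((q : ℝ) * Real.pi) : ℝ) : ℂ) * ((2 * Real.cos ((q : ℝ) * Real.pi) : ℝ) : ℂ) = ((14 / 5 : ℚ) : ℂ) := by
      rw [hcos]
      push_cast
      have : Real.sqrt (7/10) * Real.sqrt (7/10) = 7/10 :=
        Real.mul_self_sqrt (by norm_num)
      have h7 : ((Real.sqrt (7/10) : ℝ) : ℂ) * ((Real.sqrt (7/10) : ℝ) : ℂ) = (7/10 : ℂ) := by
        rw [← Complex.ofReal_mul, this]; norm_num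
      linear_combination 4 * h7
    rw [hval] at hsq
    have : IsIntegral ℤ ((14 / 5 : ℚ)) := by
      rwa [show ((14/5 : ℚ) : ℂ) = algebraMap ℚ ℂ (14/5 : ℚ) from rfl,
        isIntegral_algebraMap_iff (algebraMap ℚ ℂ).injective] at hsq
    obtain ⟨y, hy⟩ := IsIntegrallyClosed.isIntegral_iff.1 this
    have : (5 : ℚ) * (y : ℚ) = 14 := by
      rw [show ((y : ℚ)) = algebraMap ℤ ℚ y from rfl, hy]; norm_num
    have : (5 * y : ℤ) = 14 := by exact_mod_cast this
    omega
  have h2 : Irrational (Real.pi / Real.arccos (-Real.sqrt (7 / 10))) := by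
    rintro ⟨r, hr⟩
    apply h1 r⁻¹
    push_cast
    rw [hr, inv_div, div_mul_cancel₀ _ Real.pi_ne_zero]
  exact ⟨h1, h2, by simpa using h2.add_ratCast (5/2)⟩
end

section
/- Let (x,y,z) be a spherical triangle, i.e., a triple of linearly independent unit vectors in ℝ³. Then there exists a unique triple (x',y',z') of unit vectors in ℝ³ satisfying ⟨x',y⟩ = ⟨x',z⟩ = 0 and ⟨x',x⟩ > 0; ⟨y',z⟩ = ⟨y',x⟩ = 0 and ⟨y',y⟩ > 0; ⟨z',x⟩ = ⟨z',y⟩ = 0 and ⟨z',z⟩ > 0. Moreover (x',y',z') is again a spherical triangle (x',y',z' are linearly independent), and the polar transformation is involutive: the polar triangle of (x',y',z') is (x,y,z). -/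
/-- ℝ³ with the Euclidean inner product. -/
noncomputable abbrev E3 := EuclideanSpace ℝ (Fin 3)

/-- `(x',y',z')` is the polar triple of `(x,y,z)`. -/
def IsPolarTriple (x y z x' y' z' : E3) : Prop :=
  ‖x'‖ = 1 ∧ ‖y'‖ = 1 ∧ ‖z'‖ = 1 ∧
  (inner ℝ x' y : ℝ) = 0 ∧ (inner ℝ x' z : ℝ) = 0 ∧ 0 < (inner ℝ x' x : ℝ) ∧
  (inner ℝ y' z : ℝ) = 0 ∧ (inner ℝ y' x : ℝ) = 0 ∧ 0 < (inner ℝ y' y : ℝ) ∧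
  (inner ℝ z' x : ℝ) = 0 ∧ (inner ℝ z' y : ℝ) = 0 ∧ 0 < (inner ℝ z' z : ℝ)

open FiniteDimensional Submodule

lemma aux_exists_unique (x y z : E3) (hli : LinearIndependent ℝ ![x, y, z]) :
    ∃! x' : E3, ‖x'‖ = 1 ∧ (inner ℝ x' y : ℝ) = 0 ∧ (inner ℝ x' z : ℝ) = 0 ∧
      0 < (inner ℝ x' x : ℝ) := by
  have hE : Module.finrank ℝ E3 = 3 := finrank_euclideanSpace_fin
  -- y, z linearly independent
  have hyz : LinearIndependent ℝ ![y, z] := by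
    have h := hli.comp (fun i : Fin 2 => i.succ) (Fin.succ_injective 2)
    have he : (![x, y, z] ∘ fun i : Fin 2 => i.succ) = ![y, z] := by
      funext i; fin_cases i <;> rfl
    rwa [he] at h
  have hrange3 : Set.range ![x, y, z] = {x, y, z} := by
    ext w; simp [Fin.exists_fin_succ, Matrix.cons_val_zero]; tauto
  have hrange2 : Set.range ![y, z] = {y, z} := by
    ext w; simp [Fin.exists_fin_succ, Matrix.cons_val_zero]; tauto
  set K : Submodule ℝ E3 := span ℝ {y, z} with hK
  have hKr : Module.finrank ℝ K = 2 := by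
    rw [hK, ← hrange2, finrank_span_eq_card hyz]; simp
  have htop : span ℝ {x, y, z} = ⊤ := by
    apply Submodule.eq_top_of_finrank_eq
    rw [← hrange3, finrank_span_eq_card hli, hE]; simp
  have hKne : K ≠ ⊤ := by
    intro h
    rw [h, finrank_top, hE] at hKr; norm_num at hKr
  have hbot : Kᗮ ≠ ⊥ := by
    simp only [ne_eq, Submodule.orthogonal_eq_bot_iff]; exact hKne
  obtain ⟨u, huK, hune⟩ := Submodule.exists_mem_ne_zero_of_ne_bot hbot
  have huy : (inner ℝ u y : ℝ) = 0 := by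
    have := huK y (Submodule.subset_span (by simp))
    rwa [real_inner_comm] at this
  have huz : (inner ℝ u z : ℝ) = 0 := by
    have := huK z (Submodule.subset_span (by simp))
    rwa [real_inner_comm] at this
  have hux : (inner ℝ u x : ℝ) ≠ 0 := by
    intro h0
    apply hune
    have : u ∈ (span ℝ ({x, y, z} : Set E3))ᗮ := by
      rw [Submodule.mem_orthogonal]
      intro v hv
      induction hv using Submodule.span_induction with
      | mem v hv =>
        rcases hv with rfl | rfl | rfl
        · rw [real_inner_comm]; exact h0
        · rw [real_inner_comm]; exact huy
        · rw [real_inner_comm]; exact huz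
      | zero => simp
      | add a b _ _ ha hb => rw [inner_add_left, ha, hb, add_zero]
      | smul c a _ ha => rw [inner_smul_left, ha, mul_zero]
    rw [htop, Submodule.top_orthogonal_eq_bot] at this
    simpa using this
  set v : E3 := (inner ℝ u x : ℝ) • u with hv
  have hvne : v ≠ 0 := smul_ne_zero hux hune
  have hvnorm : ‖v‖ ≠ 0 := norm_ne_zero_iff.mpr hvne
  refine ⟨‖v‖⁻¹ • v, ⟨?_, ?_, ?_, ?_⟩, ?_⟩
  · rw [norm_smul, norm_inv, norm_norm, inv_mul_cancel₀ hvnorm]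
  · rw [real_inner_smul_left, hv, real_inner_smul_left, huy]; ring
  · rw [real_inner_smul_left, hv, real_inner_smul_left, huz]; ring
  · rw [real_inner_smul_left, hv, real_inner_smul_left, ← mul_assoc]
    have h1 : 0 < (inner ℝ u x : ℝ) * (inner ℝ u x : ℝ) := mul_self_pos.mpr hux
    have h2 : (0:ℝ) < ‖v‖⁻¹ := inv_pos.mpr (norm_pos_iff.mpr hvne)
    rw [mul_assoc]
    exact mul_pos h2 h1

  · rintro w ⟨hw1, hwy, hwz, hwx⟩
    set x' : E3 := ‖v‖⁻¹ • v with hx'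
    have hmem : ∀ a : E3, (inner ℝ a y : ℝ) = 0 → (inner ℝ a z : ℝ) = 0 → a ∈ Kᗮ := by
      intro a hay haz
      rw [Submodule.mem_orthogonal]
      intro p hp
      induction hp using Submodule.span_induction with
      | mem p hp =>
        rcases hp with rfl | rfl
        · rw [real_inner_comm]; exact hay
        · rw [real_inner_comm]; exact haz
      | zero => simp
      | add a b _ _ ha hb => rw [inner_add_left, ha, hb, add_zero]
      | smul c a _ ha => rw [inner_smul_left, ha, mul_zero]
    have hx'y : (inner ℝ x' y : ℝ) = 0 := by
      rw [hx', real_inner_smul_left, hv, real_inner_smul_left, huy]; ring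
    have hx'z : (inner ℝ x' z : ℝ) = 0 := by
      rw [hx', real_inner_smul_left, hv, real_inner_smul_left, huz]; ring
    have hx'x : 0 < (inner ℝ x' x : ℝ) := by
      rw [hx', real_inner_smul_left, hv, real_inner_smul_left, ← mul_assoc, mul_assoc]
      exact mul_pos (inv_pos.mpr (norm_pos_iff.mpr hvne)) (mul_self_pos.mpr hux)
    have hx'norm : ‖x'‖ = 1 := by
      rw [hx', norm_smul, norm_inv, norm_norm, inv_mul_cancel₀ hvnorm]
    have hx'ne : x' ≠ 0 := by intro h; rw [h, norm_zero] at hx'norm; norm_num at hx'norm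
    have hwmem : w ∈ Kᗮ := hmem w hwy hwz
    have hx'mem : x' ∈ Kᗮ := hmem x' hx'y hx'z
    have hfr : Module.finrank ℝ Kᗮ = 1 := by
      have h := Submodule.finrank_add_finrank_orthogonal K
      rw [hKr, hE] at h
      omega
    have hspan : span ℝ {x'} = Kᗮ := by
      apply Submodule.eq_of_le_of_finrank_le
      · rw [Submodule.span_le, Set.singleton_subset_iff]; exact hx'mem
      · rw [hfr, finrank_span_singleton hx'ne]
    rw [← hspan, Submodule.mem_span_singleton] at hwmem
    obtain ⟨t, rfl⟩ := hwmem
    have hta : |t| = 1 := by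
      rw [norm_smul, hx'norm, mul_one, Real.norm_eq_abs] at hw1
      exact hw1
    have htx : 0 < t * (inner ℝ x' x : ℝ) := by
      rwa [real_inner_smul_left] at hwx
    have ht : 0 < t := by nlinarith [hx'x, htx]
    rw [abs_of_pos ht] at hta
    rw [hta, one_smul]

lemma li_rotate {a b c : E3} (h : LinearIndependent ℝ ![a, b, c]) :
    LinearIndependent ℝ ![b, c, a] := by
  have h2 := h.comp (finRotate 3) (finRotate 3).injective
  have he : (![a, b, c] ∘ (finRotate 3)) = ![b, c, a] := by
    funext i; fin_cases i <;> rfl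
  rwa [he] at h2

/-- every spherical triangle has a unique polar triple; the polar
triple is again a spherical triangle, and the polar transformation is involutive. -/
theorem polar_triangle_exists_unique (x y z : E3)
    (hx : ‖x‖ = 1) (hy : ‖y‖ = 1) (hz : ‖z‖ = 1)
    (hli : LinearIndependent ℝ ![x, y, z]) :
    ∃ x' y' z' : E3, IsPolarTriple x y z x' y' z' ∧
      (∀ x'' y'' z'' : E3, IsPolarTriple x y z x'' y'' z'' →
        x'' = x' ∧ y'' = y' ∧ z'' = z') ∧
      LinearIndependent ℝ ![x', y', z'] ∧
      IsPolarTriple x' y' z' x y z := by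
  obtain ⟨x', ⟨hx'n, hx'y, hx'z, hx'x⟩, hxu⟩ := aux_exists_unique x y z hli
  obtain ⟨y', ⟨hy'n, hy'z, hy'x, hy'y⟩, hyu⟩ := aux_exists_unique y z x (li_rotate hli)
  obtain ⟨z', ⟨hz'n, hz'x, hz'y, hz'z⟩, hzu⟩ :=
    aux_exists_unique z x y (li_rotate (li_rotate hli))
  refine ⟨x', y', z', ⟨hx'n, hy'n, hz'n, hx'y, hx'z, hx'x, hy'z, hy'x, hy'y,
    hz'x, hz'y, hz'z⟩, ?_, ?_, ?_⟩
  · rintro x'' y'' z'' ⟨h1, h2, h3, h4, h5, h6, h7, h8, h9, h10, h11, h12⟩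
    exact ⟨hxu x'' ⟨h1, h4, h5, h6⟩, hyu y'' ⟨h2, h7, h8, h9⟩, hzu z'' ⟨h3, h10, h11, h12⟩⟩
  · rw [Fintype.linearIndependent_iff]
    intro g hg
    rw [Fin.sum_univ_three] at hg
    simp only [Matrix.cons_val_zero, Matrix.cons_val_one, Matrix.head_cons,
      Matrix.cons_val_two, Matrix.tail_cons] at hg
    have key : ∀ w : E3, (inner ℝ (g 0 • x' + g 1 • y' + g 2 • z') w : ℝ) = 0 := by
      intro w; rw [hg]; simp
    have e0 := key x
    have e1 := key y
    have e2 := key z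
    simp only [inner_add_left, real_inner_smul_left, hx'y, hx'z, hy'z, hy'x,
      hz'x, hz'y, mul_zero, add_zero, zero_add] at e0 e1 e2
    have g0 : g 0 = 0 := by
      by_contra h
      exact h (by nlinarith [hx'x, e0])
    have g1 : g 1 = 0 := by
      by_contra h
      exact h (by nlinarith [hy'y, e1])
    have g2 : g 2 = 0 := by
      by_contra h
      exact h (by nlinarith [hz'z, e2])
    intro i; fin_cases i <;> assumption
  · exact ⟨hx, hy, hz,
      by rw [real_inner_comm]; exact hy'x, by rw [real_inner_comm]; exact hz'x,
      by rw [real_inner_comm]; exact hx'x, by rw [real_inner_comm]; exact hz'y,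
      by rw [real_inner_comm]; exact hx'y, by rw [real_inner_comm]; exact hy'y,
      by rw [real_inner_comm]; exact hx'z, by rw [real_inner_comm]; exact hy'z,
      by rw [real_inner_comm]; exact hz'z⟩
end
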